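/- arXiv:1808.06191 — 3 statements merged into one kernel-verified Lean document; each statement's English description precedes it below -/
import Mathlib

section
/- Let g ∈ S(R^k) and let w_1,...,w_k ∈ R^n be orthonormal vectors, completed to an orthonormal basis w_1,...,w_n of R^n. Let l(x) = g(w_1^T x,...,w_k^T x). Then the Fourier transform of the tempered distribution T_l equals (2π)^{(n−k)/2} F[g](Q_1^T ξ) · δ^{n−k}(Q_2^T ξ), where Q_1 = [w_1,...,w_k], Q_2 = [w_{k+1},...,w_n], and δ^{n−k} is the (n−k)-fold product of Dirac deltas; in particular, F[T_l] is supported in the k-dimensional subspace span(w_1,...,w_k). -/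
open MeasureTheory Real FourierTransform Complex
open scoped RealInnerProductSpace

section helpers

lemma kernel_norm_one (r : ℝ) : ‖Complex.exp (-Complex.I * (r:ℂ))‖ = 1 := by
  rw [Complex.norm_exp]
  have : (-Complex.I * (r:ℂ)).re = 0 := by simp
  rw [this, Real.exp_zero]

variable {V : Type*} [NormedAddCommGroup V] [InnerProductSpace ℝ V] [FiniteDimensional ℝ V]
  [MeasurableSpace V] [BorelSpace V]

lemma fourier_kernel_eq (f : V → ℂ) (v : V) :
    (∫ b, f b * Complex.exp (-Complex.I * ((⟪v, b⟫ : ℝ) : ℂ))) = 𝓕 f ((2 * π)⁻¹ • v) := by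
  rw [Real.fourier_eq']
  congr 1
  funext b
  rw [smul_eq_mul, mul_comm]
  have hr : -2 * π * ⟪b, (2 * π)⁻¹ • v⟫ = -⟪v, b⟫ := by
    rw [real_inner_smul_right, real_inner_comm]
    have h2π : (2 * π) ≠ 0 := by positivity
    field_simp
  congr 1
  rw [hr]
  push_cast
  ring

lemma integral_fourier_eq_at_zero [CompleteSpace V] (f : V → ℂ) (hf : Integrable f)
    (hFf : Integrable (𝓕 f)) (hc : ContinuousAt f 0) :
    (∫ v, 𝓕 f v) = f 0 := by
  have := MeasureTheory.Integrable.fourierInv_fourier_eq (f := f) hf hFf (v := (0:V)) hc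
  rw [← this, Real.fourierInv_eq]
  simp

lemma schwartz_decay_bound {X : Type*} [NormedAddCommGroup X] [NormedSpace ℝ X]
    (f : SchwartzMap X ℂ) (N : ℕ) : ∃ C : ℝ, 0 ≤ C ∧ ∀ x, ‖f x‖ ≤ C * ((1 + ‖x‖)⁻¹) ^ N := by
  have h := f.one_add_le_sup_seminorm_apply (𝕜 := ℝ) (m := (N, 0)) (k := N) (n := 0) le_rfl le_rfl
  refine ⟨2 ^ N * (Finset.Iic (N, 0)).sup (fun m => SchwartzMap.seminorm ℝ m.1 m.2) f, ?_, ?_⟩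
  · positivity
  · intro x
    have hx := h x
    rw [norm_iteratedFDeriv_zero] at hx
    have hpos : (0:ℝ) < (1 + ‖x‖) ^ N := by positivity
    rw [inv_pow, ← div_eq_mul_inv, le_div_iff₀ hpos, mul_comm ‖f x‖]
    exact hx

lemma integrable_one_add_inv_pow {d : ℕ} (N : ℕ) (h : d < N) :
    Integrable (fun x : EuclideanSpace ℝ (Fin d) => ((1 + ‖x‖)⁻¹) ^ N) := by
  have : ((Module.finrank ℝ (EuclideanSpace ℝ (Fin d)) : ℝ)) < (N : ℝ) := by
    rw [finrank_euclideanSpace_fin]; exact_mod_cast h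
  have hint := integrable_one_add_norm (E := EuclideanSpace ℝ (Fin d)) (μ := volume) (r := N) this
  convert hint using 2 with x
  rw [Real.rpow_neg (by positivity), Real.rpow_natCast, inv_pow]

end helpers

open MeasureTheory

/-- The Fourier normalization constant `(2π)^(-n/2)` as a complex number. -/
noncomputable def fourierConst (n : ℕ) : ℂ :=
  ((Real.rpow (2 * Real.pi) (-(n : ℝ) / 2)) : ℝ)

set_option maxHeartbeats 1600000 in
/-- For `l x = g(w₁ᵀx, …, w_kᵀx)` with `w₁, …, w_n` an orthonormal basis of `ℝⁿ`
(the first `k` of which enter `l`), the Fourier transform of `T_l` is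
`(2π)^((n-k)/2) F[g](Q₁ᵀξ) δ^{n-k}(Q₂ᵀξ)`; tested against a Schwartz `φ`, this reads
`T_l(F[φ]) = (2π)^((n-k)/2) ∫_{ℝᵏ} F[g](y) φ(Q₁ y) dy`.  In particular `F[T_l]` is
supported in `span(w₁, …, w_k)`. -/
theorem fourier_transform_of_ridge_function (n k : ℕ) (hkn : k ≤ n)
    (w : Fin n → EuclideanSpace ℝ (Fin n)) (hw : Orthonormal ℝ w)
    (g : SchwartzMap (EuclideanSpace ℝ (Fin k)) ℂ)
    (l : EuclideanSpace ℝ (Fin n) → ℂ)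
    (hl : ∀ x, l x = g ((EuclideanSpace.equiv (Fin k) ℝ).symm
      (fun i : Fin k => inner ℝ (w (Fin.castLE hkn i)) x)))
    (Fg : EuclideanSpace ℝ (Fin k) → ℂ)
    (hFg : ∀ y, Fg y = fourierConst k *
      ∫ z, g z * Complex.exp (-Complex.I * ((inner ℝ y z : ℝ) : ℂ)))
    (Fφ : SchwartzMap (EuclideanSpace ℝ (Fin n)) ℂ → EuclideanSpace ℝ (Fin n) → ℂ)
    (hFφ : ∀ φ ξ, Fφ φ ξ = fourierConst n *
      ∫ z, φ z * Complex.exp (-Complex.I * ((inner ℝ ξ z : ℝ) : ℂ))) :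
    ∀ φ : SchwartzMap (EuclideanSpace ℝ (Fin n)) ℂ,
      (∫ x, l x * Fφ φ x) =
        ((Real.rpow (2 * Real.pi) (((n : ℝ) - (k : ℝ)) / 2)) : ℂ) *
          ∫ y : EuclideanSpace ℝ (Fin k),
            Fg y * φ (∑ i : Fin k, y i • w (Fin.castLE hkn i)) := by
  intro φ
  classical
  set m := n - k with hmdef
  have hkm : k + m = n := Nat.add_sub_cancel' hkn
  -- the orthonormal basis
  have hsp : ⊤ ≤ Submodule.span ℝ (Set.range w) :=
    (Submodule.eq_top_of_finrank_eq (by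
      rw [finrank_span_eq_card hw.linearIndependent, finrank_euclideanSpace_fin,
        Fintype.card_fin])).ge
  let b : OrthonormalBasis (Fin n) ℝ (EuclideanSpace ℝ (Fin n)) := OrthonormalBasis.mk hw hsp
  have hb : ∀ i, b i = w i := fun i => congrFun (OrthonormalBasis.coe_mk hw hsp) i
  -- index equivalence
  let e : (Fin k ⊕ Fin m) ≃ Fin n := finSumFinEquiv.trans (finCongr hkm)
  have he_inl : ∀ j : Fin k, e (Sum.inl j) = Fin.castLE hkn j := by
    intro j; ext; simp [e, finCongr]
  -- the coordinate-splicing measurable equivalence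
  let Tm : ((EuclideanSpace ℝ (Fin k)) × (EuclideanSpace ℝ (Fin m))) ≃ᵐ
      (EuclideanSpace ℝ (Fin n)) :=
    (((MeasurableEquiv.toLp 2 (Fin k → ℝ)).symm).prodCongr
        ((MeasurableEquiv.toLp 2 (Fin m → ℝ)).symm)).trans
      (((MeasurableEquiv.sumPiEquivProdPi (fun _ : Fin k ⊕ Fin m => ℝ)).symm).trans
        ((MeasurableEquiv.piCongrLeft (fun _ : Fin n => ℝ) e).trans
          ((MeasurableEquiv.toLp 2 (Fin n → ℝ)).symm).symm))
  have hTm : MeasurePreserving (⇑Tm) volume volume := by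
    have h1 : MeasurePreserving
        (Prod.map (⇑((MeasurableEquiv.toLp 2 (Fin k → ℝ)).symm))
          (⇑((MeasurableEquiv.toLp 2 (Fin m → ℝ)).symm)))
        (volume.prod volume) (volume.prod volume) :=
      (EuclideanSpace.volume_preserving_symm_measurableEquiv_toLp (Fin k)).prod
        (EuclideanSpace.volume_preserving_symm_measurableEquiv_toLp (Fin m))
    have h2 := volume_measurePreserving_sumPiEquivProdPi_symm (fun _ : Fin k ⊕ Fin m => ℝ)
    have h3 := volume_measurePreserving_piCongrLeft (fun _ : Fin n => ℝ) e
    have h4 := (EuclideanSpace.volume_preserving_symm_measurableEquiv_toLp (Fin n)).symm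
    exact (((h4.comp h3).comp h2).comp h1 : _)
  -- coordinates of Tm
  have hTcoord : ∀ (p : (EuclideanSpace ℝ (Fin k)) × (EuclideanSpace ℝ (Fin m)))
      (s : Fin k ⊕ Fin m), Tm p (e s) = Sum.elim (fun j => p.1 j) (fun j => p.2 j) s := by
    intro p s
    show (MeasurableEquiv.piCongrLeft (fun _ : Fin n => ℝ) e)
      ((MeasurableEquiv.sumPiEquivProdPi (fun _ : Fin k ⊕ Fin m => ℝ)).symm
        ((fun i => p.1 i), (fun i => p.2 i))) (e s) = _
    rw [MeasurableEquiv.piCongrLeft_apply_apply]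
    rw [MeasurableEquiv.coe_sumPiEquivProdPi_symm]
    cases s <;> rfl
  -- the full change of variables: splice then rotate onto the basis w
  let Ue : ((EuclideanSpace ℝ (Fin k)) × (EuclideanSpace ℝ (Fin m))) ≃ᵐ
      (EuclideanSpace ℝ (Fin n)) :=
    Tm.trans b.repr.symm.toHomeomorph.toMeasurableEquiv
  have hUe_eq : ∀ p, Ue p = b.repr.symm (Tm p) := fun p => rfl
  have hUe_mp : MeasurePreserving (⇑Ue) volume volume :=
    b.measurePreserving_repr_symm.comp hTm
  have hUcoord : ∀ (p : (EuclideanSpace ℝ (Fin k)) × (EuclideanSpace ℝ (Fin m)))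
      (s : Fin k ⊕ Fin m), b.repr (Ue p) (e s) = Sum.elim (fun j => p.1 j) (fun j => p.2 j) s := by
    intro p s
    rw [hUe_eq, LinearIsometryEquiv.apply_symm_apply]
    exact hTcoord p s
  have hwcoord : ∀ (p : (EuclideanSpace ℝ (Fin k)) × (EuclideanSpace ℝ (Fin m))) (j : Fin k),
      ⟪w (Fin.castLE hkn j), Ue p⟫ = p.1 j := by
    intro p j
    rw [← hb, ← OrthonormalBasis.repr_apply_apply, ← he_inl j]
    exact hUcoord p (Sum.inl j)
  have hUinner : ∀ p q, ⟪Ue p, Ue q⟫ = ⟪p.1, q.1⟫ + ⟪p.2, q.2⟫ := by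
    intro p q
    rw [hUe_eq, hUe_eq, LinearIsometryEquiv.inner_map_map]
    have expand : ∀ (x y : EuclideanSpace ℝ (Fin n)), ⟪x, y⟫ = ∑ i, x i * y i := by
      intro x y
      simp [PiLp.inner_apply, RCLike.inner_apply, conj_trivial]
      exact Finset.sum_congr rfl fun _ _ => mul_comm _ _
    have expand2 : ∀ {d : ℕ} (x y : EuclideanSpace ℝ (Fin d)), ⟪x, y⟫ = ∑ i, x i * y i := by
      intro d x y
      simp [PiLp.inner_apply, RCLike.inner_apply, conj_trivial]
      exact Finset.sum_congr rfl fun _ _ => mul_comm _ _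
    rw [expand, expand2, expand2]
    rw [← Fintype.sum_equiv e (fun s => Tm p (e s) * Tm q (e s))
      (fun i => Tm p i * Tm q i) (fun s => rfl)]
    rw [Fintype.sum_sum_type]
    congr 1
    · exact Finset.sum_congr rfl fun j _ => by simp [hTcoord p, hTcoord q]
    · exact Finset.sum_congr rfl fun j _ => by simp [hTcoord p, hTcoord q]
  have hUnormsq : ∀ p, ‖Ue p‖ ^ 2 = ‖p.1‖ ^ 2 + ‖p.2‖ ^ 2 := by
    intro p
    have := hUinner p p
    rw [real_inner_self_eq_norm_sq, real_inner_self_eq_norm_sq, real_inner_self_eq_norm_sq] at this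
    exact this
  have hUnorm1 : ∀ p, ‖p.1‖ ≤ ‖Ue p‖ := by
    intro p
    nlinarith [hUnormsq p, norm_nonneg p.1, norm_nonneg p.2, norm_nonneg (Ue p)]
  have hUnorm2 : ∀ p, ‖p.2‖ ≤ ‖Ue p‖ := by
    intro p
    nlinarith [hUnormsq p, norm_nonneg p.1, norm_nonneg p.2, norm_nonneg (Ue p)]
  -- continuity of Ue
  have hTmcont : Continuous (⇑Tm) := by
    have hF : Continuous (fun p : (EuclideanSpace ℝ (Fin k)) × (EuclideanSpace ℝ (Fin m)) =>
        (fun j : Fin n => Tm p j)) := by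
      apply continuous_pi
      intro j
      obtain ⟨s, rfl⟩ := e.surjective j
      have : (fun p : (EuclideanSpace ℝ (Fin k)) × (EuclideanSpace ℝ (Fin m)) => Tm p (e s)) =
          fun p => Sum.elim (fun j => p.1 j) (fun j => p.2 j) s := by
        funext p; exact hTcoord p s
      rw [this]
      cases s with
      | inl j =>
        exact ((continuous_apply j).comp
          ((EuclideanSpace.equiv (Fin k) ℝ).continuous.comp continuous_fst))
      | inr j =>
        exact ((continuous_apply j).comp
          ((EuclideanSpace.equiv (Fin m) ℝ).continuous.comp continuous_snd))
    exact ((EuclideanSpace.equiv (Fin n) ℝ).symm.continuous.comp hF : _)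
  have hUecont : Continuous (⇑Ue) :=
    b.repr.symm.continuous.comp hTmcont
  -- Ue (y, 0) is the ridge point
  have hU0 : ∀ y : EuclideanSpace ℝ (Fin k),
      Ue (y, 0) = ∑ i : Fin k, y i • w (Fin.castLE hkn i) := by
    intro y
    apply b.repr.injective
    rw [hUe_eq, LinearIsometryEquiv.apply_symm_apply, map_sum]
    ext j
    obtain ⟨s, rfl⟩ := e.surjective j
    have hsum : (∑ i : Fin k, b.repr (y i • w (Fin.castLE hkn i))) (e s) =
        ∑ i : Fin k, y i * (if e s = Fin.castLE hkn i then (1:ℝ) else 0) := by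
      rw [WithLp.ofLp_sum, Finset.sum_apply]
      refine Finset.sum_congr rfl fun i _ => ?_
      rw [_root_.map_smul, ← hb, b.repr_self]
      simp [EuclideanSpace.single_apply]
    rw [hsum]
    rw [show (Tm (y, 0)) (e s) = Sum.elim (fun j => y j) (fun j => (0 : EuclideanSpace ℝ (Fin m)) j) s
      from hTcoord (y, 0) s]
    cases s with
    | inl j =>
      rw [Finset.sum_eq_single j]
      · simp [he_inl]
      · intro i _ hij
        rw [if_neg ?_, mul_zero]
        rw [he_inl]
        intro hc
        exact hij ((Fin.castLE_injective hkn) hc).symm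
      · intro h; exact absurd (Finset.mem_univ j) h
    | inr j =>
      simp only [Sum.elim_inr]
      have hz : ∀ i : Fin k, e (Sum.inr j) ≠ Fin.castLE hkn i := by
        intro i hc
        have h1 : (e (Sum.inr j) : ℕ) = k + j := by simp [e, finCongr, finSumFinEquiv]
        have h2 : ((Fin.castLE hkn i : Fin n) : ℕ) = i := rfl
        omega
      rw [Finset.sum_eq_zero]
      · rfl
      · intro i _
        rw [if_neg (hz i), mul_zero]
  -- abbreviations for the analytic part
  set FΦ : EuclideanSpace ℝ (Fin n) → ℂ := Fφ φ with hFΦdef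
  set ψ : (EuclideanSpace ℝ (Fin k)) × (EuclideanSpace ℝ (Fin m)) → ℂ :=
    fun p => φ (Ue p) with hψdef
  set σ : EuclideanSpace ℝ (Fin k) → ℂ := fun a => ψ (a, 0) with hσdef
  set Φ : SchwartzMap (EuclideanSpace ℝ (Fin n)) ℂ := SchwartzMap.fourierTransformCLM ℂ φ
    with hΦdef
  have h2π : (0:ℝ) < 2 * π := by positivity
  have h2π1 : (1:ℝ) ≤ 2 * π := by nlinarith [Real.pi_gt_three]
  have hc_pos : ∀ j : ℕ, (0:ℝ) < Real.rpow (2 * π) (-(j:ℝ)/2) :=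
    fun j => Real.rpow_pos_of_pos h2π _
  have hfc : ∀ j : ℕ, fourierConst j = (((2*π) ^ (-(j:ℝ)/2) : ℝ) : ℂ) := fun j => rfl
  have hc_ne : ∀ j : ℕ, fourierConst j ≠ 0 := by
    intro j
    simp only [fourierConst, ne_eq, Complex.ofReal_eq_zero]
    exact ne_of_gt (hc_pos j)
  have hc_mul : fourierConst n = fourierConst k * fourierConst m := by
    have hcast : (k:ℝ) + (m:ℝ) = (n:ℝ) := by exact_mod_cast congrArg (Nat.cast : ℕ → ℝ) hkm
    have hexp : -(n:ℝ)/2 = -(k:ℝ)/2 + -(m:ℝ)/2 := by linarith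
    rw [hfc, hfc, hfc, ← Complex.ofReal_mul, ← Real.rpow_add h2π, ← hexp]
  -- Fourier transform of φ in mathlib normalization
  have hΦeq : ∀ ξ, FΦ ξ = fourierConst n * Φ ((2*π)⁻¹ • ξ) := by
    intro ξ
    rw [hFΦdef, hFφ φ ξ, hΦdef, SchwartzMap.fourierTransformCLM_apply,
      fourier_kernel_eq (fun z => (φ z : ℂ)) ξ]
    rfl
  have hFΦcont : Continuous FΦ := by
    have : FΦ = fun ξ => fourierConst n * Φ ((2*π)⁻¹ • ξ) := funext hΦeq
    rw [this]
    exact continuous_const.mul (Φ.continuous.comp (continuous_const_smul (2*π)⁻¹))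
  -- decay bounds
  obtain ⟨Cφ, hCφ0, hCφ⟩ := schwartz_decay_bound φ (k + 1 + (m + 1))
  obtain ⟨CΦ, hCΦ0, hCΦ⟩ := schwartz_decay_bound Φ (m + 1)
  obtain ⟨Cg, hCg0, hCg⟩ := schwartz_decay_bound g (k + 1)
  have hinv1 : ∀ p : (EuclideanSpace ℝ (Fin k)) × (EuclideanSpace ℝ (Fin m)),
      (1 + ‖Ue p‖)⁻¹ ≤ (1 + ‖p.1‖)⁻¹ := by
    intro p
    exact inv_anti₀ (by positivity) (by linarith [hUnorm1 p])
  have hinv2 : ∀ p : (EuclideanSpace ℝ (Fin k)) × (EuclideanSpace ℝ (Fin m)),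
      (1 + ‖Ue p‖)⁻¹ ≤ (1 + ‖p.2‖)⁻¹ := by
    intro p
    exact inv_anti₀ (by positivity) (by linarith [hUnorm2 p])
  have hψb : ∀ p, ‖ψ p‖ ≤ Cφ * ((1 + ‖p.1‖)⁻¹) ^ (k+1) * ((1 + ‖p.2‖)⁻¹) ^ (m+1) := by
    intro p
    calc ‖ψ p‖ ≤ Cφ * ((1 + ‖Ue p‖)⁻¹) ^ (k + 1 + (m + 1)) := hCφ (Ue p)
    _ = Cφ * (((1 + ‖Ue p‖)⁻¹) ^ (k+1) * ((1 + ‖Ue p‖)⁻¹) ^ (m+1)) := by rw [pow_add]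
    _ ≤ Cφ * (((1 + ‖p.1‖)⁻¹) ^ (k+1) * ((1 + ‖p.2‖)⁻¹) ^ (m+1)) := by
        refine mul_le_mul_of_nonneg_left (mul_le_mul ?_ ?_ (by positivity) (by positivity)) hCφ0
        · exact pow_le_pow_left₀ (by positivity) (hinv1 p) _
        · exact pow_le_pow_left₀ (by positivity) (hinv2 p) _
    _ = Cφ * ((1 + ‖p.1‖)⁻¹) ^ (k+1) * ((1 + ‖p.2‖)⁻¹) ^ (m+1) := by ring
  have hscaled : ∀ t : ℝ, 0 ≤ t → (1 + (2*π)⁻¹ * t)⁻¹ ≤ (2*π) * (1 + t)⁻¹ := by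
    intro t ht
    calc (1 + (2*π)⁻¹ * t)⁻¹ ≤ ((2*π)⁻¹ * (1 + t))⁻¹ := by
          refine inv_anti₀ (by positivity) ?_
          rw [mul_add, mul_one]
          have h1 : (2*π)⁻¹ ≤ 1 := by
            rw [inv_le_one_iff₀]; right; exact h2π1
          have h2 : (2*π)⁻¹ * t ≤ t := by
            nlinarith
          linarith
    _ = (2*π) * (1 + t)⁻¹ := by rw [mul_inv, inv_inv]
  set CF : ℝ := ‖fourierConst n‖ * CΦ * (2*π) ^ (m+1) with hCFdef
  have hCF0 : 0 ≤ CF := by positivity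
  have hFb : ∀ p : (EuclideanSpace ℝ (Fin k)) × (EuclideanSpace ℝ (Fin m)),
      ‖FΦ (Ue p)‖ ≤ CF * ((1 + ‖p.2‖)⁻¹) ^ (m+1) := by
    intro p
    rw [hΦeq (Ue p), norm_mul]
    have h1 : ‖Φ ((2*π)⁻¹ • Ue p)‖ ≤ CΦ * ((1 + (2*π)⁻¹ * ‖Ue p‖)⁻¹) ^ (m+1) := by
      have := hCΦ ((2*π)⁻¹ • Ue p)
      rwa [norm_smul, Real.norm_eq_abs, abs_of_pos (by positivity)] at this
    calc ‖fourierConst n‖ * ‖Φ ((2*π)⁻¹ • Ue p)‖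
        ≤ ‖fourierConst n‖ * (CΦ * ((1 + (2*π)⁻¹ * ‖Ue p‖)⁻¹) ^ (m+1)) :=
          mul_le_mul_of_nonneg_left h1 (norm_nonneg _)
    _ ≤ ‖fourierConst n‖ * (CΦ * ((2*π) * (1 + ‖Ue p‖)⁻¹) ^ (m+1)) := by
          refine mul_le_mul_of_nonneg_left (mul_le_mul_of_nonneg_left ?_ hCΦ0) (norm_nonneg _)
          exact pow_le_pow_left₀ (by positivity) (hscaled _ (norm_nonneg _)) _
    _ = CF * ((1 + ‖Ue p‖)⁻¹) ^ (m+1) := by rw [hCFdef, mul_pow]; ring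
    _ ≤ CF * ((1 + ‖p.2‖)⁻¹) ^ (m+1) := by
          refine mul_le_mul_of_nonneg_left ?_ hCF0
          exact pow_le_pow_left₀ (by positivity) (hinv2 p) _
  -- step A: change of variables
  have hlU : ∀ p, l (Ue p) = g p.1 := by
    intro p
    rw [hl]
    congr 1
    have h1 : (fun i : Fin k => (inner ℝ (w (Fin.castLE hkn i)) (Ue p) : ℝ)) =
        fun i => p.1 i := funext fun i => hwcoord p i
    rw [h1]
    rfl
  have hψint : Integrable ψ :=
    (hUe_mp.integrable_comp_emb Ue.measurableEmbedding).2 φ.integrable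
  have hψcont : Continuous ψ := φ.continuous.comp hUecont
  have stepA : (∫ x, l x * FΦ x) = ∫ p : (EuclideanSpace ℝ (Fin k)) ×
      (EuclideanSpace ℝ (Fin m)), g p.1 * FΦ (Ue p) := by
    rw [← hUe_mp.integral_comp Ue.measurableEmbedding (fun x => l x * FΦ x)]
    congr 1
    funext p
    show l (Ue p) * FΦ (Ue p) = _
    rw [hlU p]
  have hint1 : Integrable (fun p : (EuclideanSpace ℝ (Fin k)) ×
      (EuclideanSpace ℝ (Fin m)) => g p.1 * FΦ (Ue p)) := by
    have hbd : Integrable (fun p : (EuclideanSpace ℝ (Fin k)) × (EuclideanSpace ℝ (Fin m)) =>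
        (Cg * ((1 + ‖p.1‖)⁻¹) ^ (k+1)) * (CF * ((1 + ‖p.2‖)⁻¹) ^ (m+1))) := by
      rw [Measure.volume_eq_prod]
      exact ((integrable_one_add_inv_pow (k+1) (by omega)).const_mul Cg).mul_prod
        ((integrable_one_add_inv_pow (m+1) (by omega)).const_mul CF)
    refine hbd.mono' ?_ ?_
    · exact ((g.continuous.comp continuous_fst).mul
        (hFΦcont.comp hUecont)).aestronglyMeasurable
    · filter_upwards with p
      rw [norm_mul]
      exact mul_le_mul (hCg p.1) (hFb p) (norm_nonneg _) (by positivity)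
  have stepC : (∫ p : (EuclideanSpace ℝ (Fin k)) × (EuclideanSpace ℝ (Fin m)),
      g p.1 * FΦ (Ue p)) =
      ∫ y : EuclideanSpace ℝ (Fin k), ∫ v : EuclideanSpace ℝ (Fin m),
        g y * FΦ (Ue (y, v)) := by
    rw [Measure.volume_eq_prod] at hint1 ⊢
    exact integral_prod _ hint1
  -- the key inversion identity, for each fixed y
  have key : ∀ y : EuclideanSpace ℝ (Fin k),
      (∫ v : EuclideanSpace ℝ (Fin m), FΦ (Ue (y, v))) =
        (((2*π) ^ m : ℝ) : ℂ) * fourierConst m *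
          (fourierConst k * ∫ a : EuclideanSpace ℝ (Fin k),
            σ a * Complex.exp (-Complex.I * ((inner ℝ y a : ℝ) : ℂ))) := by
    intro y
    set hy : EuclideanSpace ℝ (Fin m) → ℂ := fun v₂ =>
      fourierConst k * ∫ a, ψ (a, v₂) * Complex.exp (-Complex.I * ((inner ℝ y a : ℝ) : ℂ))
      with hhy
    have stepE : ∀ v : EuclideanSpace ℝ (Fin m),
        FΦ (Ue (y, v)) = fourierConst m * 𝓕 hy ((2*π)⁻¹ • v) := by
      intro v
      have e1 : FΦ (Ue (y, v)) = fourierConst n *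
          ∫ q : (EuclideanSpace ℝ (Fin k)) × (EuclideanSpace ℝ (Fin m)),
            ψ q * Complex.exp (-Complex.I *
              (((inner ℝ y q.1 : ℝ) + (inner ℝ v q.2 : ℝ) : ℝ) : ℂ)) := by
        rw [hFΦdef, hFφ φ (Ue (y, v))]
        congr 1
        rw [← hUe_mp.integral_comp Ue.measurableEmbedding
          (fun z => (φ z : ℂ) * Complex.exp (-Complex.I * ((inner ℝ (Ue (y, v)) z : ℝ) : ℂ)))]
        congr 1
        funext q
        show (φ (Ue q) : ℂ) * Complex.exp (-Complex.I *
          ((inner ℝ (Ue (y, v)) (Ue q) : ℝ) : ℂ)) = _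
        rw [hUinner (y, v) q]
      rw [e1]
      have hker2 : Integrable (fun q : (EuclideanSpace ℝ (Fin k)) ×
          (EuclideanSpace ℝ (Fin m)) =>
          (ψ q * Complex.exp (-Complex.I * ((inner ℝ y q.1 : ℝ) : ℂ))) *
            Complex.exp (-Complex.I * ((inner ℝ v q.2 : ℝ) : ℂ))) := by
        refine hψint.norm.mono' ?_ ?_
        · refine Continuous.aestronglyMeasurable ?_
          refine (hψcont.mul ?_).mul ?_
          · exact Complex.continuous_exp.comp (continuous_const.mul
              (Complex.continuous_ofReal.comp (Continuous.inner continuous_const continuous_fst)))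
          · exact Complex.continuous_exp.comp (continuous_const.mul
              (Complex.continuous_ofReal.comp (Continuous.inner continuous_const continuous_snd)))
        · filter_upwards with q
          rw [norm_mul, norm_mul, kernel_norm_one, kernel_norm_one, mul_one, mul_one]
      have e2 : (∫ q : (EuclideanSpace ℝ (Fin k)) × (EuclideanSpace ℝ (Fin m)),
          ψ q * Complex.exp (-Complex.I *
            (((inner ℝ y q.1 : ℝ) + (inner ℝ v q.2 : ℝ) : ℝ) : ℂ))) =
          ∫ v₂ : EuclideanSpace ℝ (Fin m),
            (∫ a : EuclideanSpace ℝ (Fin k),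
              ψ (a, v₂) * Complex.exp (-Complex.I * ((inner ℝ y a : ℝ) : ℂ))) *
              Complex.exp (-Complex.I * ((inner ℝ v v₂ : ℝ) : ℂ)) := by
        have hsplit : ∀ q : (EuclideanSpace ℝ (Fin k)) × (EuclideanSpace ℝ (Fin m)),
            ψ q * Complex.exp (-Complex.I *
              (((inner ℝ y q.1 : ℝ) + (inner ℝ v q.2 : ℝ) : ℝ) : ℂ)) =
            (ψ q * Complex.exp (-Complex.I * ((inner ℝ y q.1 : ℝ) : ℂ))) *
              Complex.exp (-Complex.I * ((inner ℝ v q.2 : ℝ) : ℂ)) := by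
          intro q
          rw [mul_assoc, ← Complex.exp_add]
          congr 2
          push_cast
          ring
        simp only [hsplit]
        rw [Measure.volume_eq_prod] at hker2 ⊢
        rw [integral_prod_symm _ hker2]
        congr 1
        funext v₂
        rw [← integral_mul_const]
      rw [e2, ← fourier_kernel_eq hy v, hc_mul]
      have hexpand : ∀ b : EuclideanSpace ℝ (Fin m),
          hy b * Complex.exp (-Complex.I * ((inner ℝ v b : ℝ) : ℂ)) =
          fourierConst k * ((∫ a, ψ (a, b) *
            Complex.exp (-Complex.I * ((inner ℝ y a : ℝ) : ℂ))) *
            Complex.exp (-Complex.I * ((inner ℝ v b : ℝ) : ℂ))) := by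
        intro b
        rw [hhy]
        ring
      simp only [hexpand]
      rw [integral_const_mul]
      ring
    -- bounds for hy
    have hIa : Integrable (fun a : EuclideanSpace ℝ (Fin k) => Cφ * ((1+‖a‖)⁻¹)^(k+1)) :=
      (integrable_one_add_inv_pow (k+1) (by omega)).const_mul Cφ
    set Ia : ℝ := ∫ a : EuclideanSpace ℝ (Fin k), Cφ * ((1+‖a‖)⁻¹)^(k+1) with hIadef
    have hIa0 : 0 ≤ Ia := integral_nonneg fun a => by positivity
    have hψb' : ∀ (a : EuclideanSpace ℝ (Fin k)) (v₂ : EuclideanSpace ℝ (Fin m)),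
        ‖ψ (a, v₂) * Complex.exp (-Complex.I * ((inner ℝ y a : ℝ) : ℂ))‖ ≤
          (Cφ * ((1+‖a‖)⁻¹)^(k+1)) * ((1+‖v₂‖)⁻¹)^(m+1) := by
      intro a v₂
      rw [norm_mul, kernel_norm_one, mul_one]
      exact hψb (a, v₂)
    have hXbound : ∀ v₂ : EuclideanSpace ℝ (Fin m),
        ‖∫ a, ψ (a, v₂) * Complex.exp (-Complex.I * ((inner ℝ y a : ℝ) : ℂ))‖ ≤
        Ia * ((1+‖v₂‖)⁻¹)^(m+1) := by
      intro v₂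
      calc ‖∫ a, ψ (a, v₂) * Complex.exp (-Complex.I * ((inner ℝ y a : ℝ) : ℂ))‖
          ≤ ∫ a, ‖ψ (a, v₂) * Complex.exp (-Complex.I * ((inner ℝ y a : ℝ) : ℂ))‖ :=
            norm_integral_le_integral_norm _
      _ ≤ ∫ a : EuclideanSpace ℝ (Fin k),
            (Cφ * ((1+‖a‖)⁻¹)^(k+1)) * ((1+‖v₂‖)⁻¹)^(m+1) := by
            refine integral_mono_of_nonneg
              (Filter.Eventually.of_forall fun a => norm_nonneg _)
              (hIa.mul_const _) (Filter.Eventually.of_forall fun a => hψb' a v₂)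
      _ = Ia * ((1+‖v₂‖)⁻¹)^(m+1) := by rw [integral_mul_const]
    have hycont : Continuous hy := by
      refine continuous_const.mul ?_
      refine continuous_of_dominated (bound := fun a : EuclideanSpace ℝ (Fin k) =>
        Cφ * ((1+‖a‖)⁻¹)^(k+1)) ?_ ?_ hIa ?_
      · intro v₂
        refine Continuous.aestronglyMeasurable ?_
        refine (φ.continuous.comp (hUecont.comp
          (continuous_id.prodMk continuous_const))).mul ?_
        exact Complex.continuous_exp.comp (continuous_const.mul
          (Complex.continuous_ofReal.comp (Continuous.inner continuous_const continuous_id)))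
      · intro v₂
        filter_upwards with a
        refine (hψb' a v₂).trans ?_
        have hle1 : ((1+‖v₂‖)⁻¹)^(m+1) ≤ 1 := by
          apply pow_le_one₀ (by positivity)
          rw [inv_le_one_iff₀]; right; linarith [norm_nonneg v₂]
        exact mul_le_of_le_one_right (by positivity) hle1
      · filter_upwards with a
        exact (φ.continuous.comp (hUecont.comp
          (continuous_const.prodMk continuous_id))).mul continuous_const
    have hyint : Integrable hy := by
      refine ((integrable_one_add_inv_pow (m+1) (by omega)).const_mul
        (‖fourierConst k‖ * Ia)).mono' hycont.aestronglyMeasurable ?_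
      filter_upwards with v₂
      show ‖fourierConst k * ∫ a, ψ (a, v₂) *
        Complex.exp (-Complex.I * ((inner ℝ y a : ℝ) : ℂ))‖ ≤ _
      rw [norm_mul]
      calc ‖fourierConst k‖ * ‖∫ a, ψ (a, v₂) *
            Complex.exp (-Complex.I * ((inner ℝ y a : ℝ) : ℂ))‖
          ≤ ‖fourierConst k‖ * (Ia * ((1+‖v₂‖)⁻¹)^(m+1)) :=
            mul_le_mul_of_nonneg_left (hXbound v₂) (norm_nonneg _)
      _ = ‖fourierConst k‖ * Ia * ((1+‖v₂‖)⁻¹)^(m+1) := by ring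
    have h𝓕eq : ∀ u : EuclideanSpace ℝ (Fin m),
        𝓕 hy u = (fourierConst m)⁻¹ * FΦ (Ue (y, (2*π) • u)) := by
      intro u
      have h := stepE ((2*π) • u)
      rw [smul_smul, inv_mul_cancel₀ (ne_of_gt h2π), one_smul] at h
      rw [h, ← mul_assoc, inv_mul_cancel₀ (hc_ne m), one_mul]
    have h𝓕int : Integrable (𝓕 hy) := by
      refine ((integrable_one_add_inv_pow (m+1) (by omega)).const_mul
        (‖(fourierConst m)⁻¹‖ * CF)).mono' ?_ ?_
      · have hfe : 𝓕 hy = fun u => (fourierConst m)⁻¹ * FΦ (Ue (y, (2*π) • u)) :=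
          funext h𝓕eq
        rw [hfe]
        exact (continuous_const.mul (hFΦcont.comp (hUecont.comp
          (continuous_const.prodMk
            (continuous_const_smul (2*π)))))).aestronglyMeasurable
      · filter_upwards with u
        rw [h𝓕eq u, norm_mul]
        have h1 : ‖FΦ (Ue (y, (2*π) • u))‖ ≤ CF * ((1+‖(2*π) • u‖)⁻¹)^(m+1) :=
          hFb (y, (2*π) • u)
        have h2 : (1+‖(2*π) • u‖)⁻¹ ≤ (1+‖u‖)⁻¹ := by
          apply inv_anti₀ (by positivity)
          rw [norm_smul, Real.norm_eq_abs, abs_of_pos h2π]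
          nlinarith [norm_nonneg u]
        calc ‖(fourierConst m)⁻¹‖ * ‖FΦ (Ue (y, (2*π) • u))‖
            ≤ ‖(fourierConst m)⁻¹‖ * (CF * ((1+‖u‖)⁻¹)^(m+1)) := by
              refine mul_le_mul_of_nonneg_left (h1.trans ?_) (norm_nonneg _)
              exact mul_le_mul_of_nonneg_left
                (pow_le_pow_left₀ (by positivity) h2 _) hCF0
        _ = ‖(fourierConst m)⁻¹‖ * CF * ((1+‖u‖)⁻¹)^(m+1) := by ring
    calc (∫ v : EuclideanSpace ℝ (Fin m), FΦ (Ue (y, v)))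
        = ∫ v : EuclideanSpace ℝ (Fin m), fourierConst m * 𝓕 hy ((2*π)⁻¹ • v) := by
          simp only [stepE]
    _ = fourierConst m * ∫ v : EuclideanSpace ℝ (Fin m), 𝓕 hy ((2*π)⁻¹ • v) :=
        integral_const_mul _ _
    _ = fourierConst m * (|(((2*π)⁻¹) ^
          (Module.finrank ℝ (EuclideanSpace ℝ (Fin m))))⁻¹| • ∫ u, 𝓕 hy u) := by
        rw [MeasureTheory.Measure.integral_comp_smul]
    _ = fourierConst m * ((((2*π) ^ m : ℝ)) • (hy 0)) := by
        rw [integral_fourier_eq_at_zero hy hyint h𝓕int hycont.continuousAt,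
          finrank_euclideanSpace_fin]
        congr 2
        rw [← inv_pow, inv_inv]
        exact abs_of_pos (by positivity)
    _ = (((2*π) ^ m : ℝ) : ℂ) * fourierConst m *
          (fourierConst k * ∫ a, σ a *
            Complex.exp (-Complex.I * ((inner ℝ y a : ℝ) : ℂ))) := by
        rw [Complex.real_smul]
        have hy0 : hy 0 = fourierConst k * ∫ a, σ a *
            Complex.exp (-Complex.I * ((inner ℝ y a : ℝ) : ℂ)) := rfl
        rw [hy0]
        ring
  -- put the inversion identity back into the double integral
  have step2 : (∫ y : EuclideanSpace ℝ (Fin k), ∫ v : EuclideanSpace ℝ (Fin m),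
      g y * FΦ (Ue (y, v))) =
      (((2*π) ^ m : ℝ) : ℂ) * fourierConst m *
        ∫ y : EuclideanSpace ℝ (Fin k), g y * (fourierConst k *
          ∫ a, σ a * Complex.exp (-Complex.I * ((inner ℝ y a : ℝ) : ℂ))) := by
    rw [← integral_const_mul]
    congr 1
    funext y
    rw [integral_const_mul, key y]
    ring
  -- multiplication formula
  have hσcont : Continuous σ :=
    φ.continuous.comp (hUecont.comp (continuous_id.prodMk continuous_const))
  have hσint : Integrable σ := by
    refine ((integrable_one_add_inv_pow (k+1) (by omega)).const_mul Cφ).mono'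
      hσcont.aestronglyMeasurable ?_
    filter_upwards with a
    have h := hψb (a, 0)
    simpa using h
  have hprodint : Integrable (fun z : (EuclideanSpace ℝ (Fin k)) ×
      (EuclideanSpace ℝ (Fin k)) =>
      g z.1 * (σ z.2 * Complex.exp (-Complex.I * ((inner ℝ z.1 z.2 : ℝ) : ℂ)))) := by
    have hb2 : Integrable (fun z : (EuclideanSpace ℝ (Fin k)) ×
        (EuclideanSpace ℝ (Fin k)) => ‖g z.1‖ * ‖σ z.2‖) := by
      rw [Measure.volume_eq_prod]
      exact g.integrable.norm.mul_prod hσint.norm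
    refine hb2.mono' ?_ ?_
    · refine Continuous.aestronglyMeasurable ?_
      refine (g.continuous.comp continuous_fst).mul ((hσcont.comp continuous_snd).mul ?_)
      exact Complex.continuous_exp.comp (continuous_const.mul
        (Complex.continuous_ofReal.comp (Continuous.inner continuous_fst continuous_snd)))
    · filter_upwards with z
      rw [norm_mul, norm_mul, kernel_norm_one, mul_one]
  have stepH : (∫ y : EuclideanSpace ℝ (Fin k), g y * (fourierConst k *
      ∫ a, σ a * Complex.exp (-Complex.I * ((inner ℝ y a : ℝ) : ℂ)))) =
      ∫ a, Fg a * σ a := by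
    have h1 : ∀ y : EuclideanSpace ℝ (Fin k), g y * (fourierConst k *
        ∫ a, σ a * Complex.exp (-Complex.I * ((inner ℝ y a : ℝ) : ℂ))) =
        fourierConst k * ∫ a, g y * (σ a *
          Complex.exp (-Complex.I * ((inner ℝ y a : ℝ) : ℂ))) := by
      intro y
      rw [integral_const_mul]
      ring
    simp only [h1]
    rw [integral_const_mul]
    rw [Measure.volume_eq_prod] at hprodint
    rw [integral_integral_swap hprodint]
    have h2 : ∀ a : EuclideanSpace ℝ (Fin k),
        (∫ y : EuclideanSpace ℝ (Fin k), g y * (σ a *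
          Complex.exp (-Complex.I * ((inner ℝ y a : ℝ) : ℂ)))) =
        σ a * ∫ y, g y * Complex.exp (-Complex.I * ((inner ℝ a y : ℝ) : ℂ)) := by
      intro a
      rw [← integral_const_mul]
      congr 1
      funext y
      rw [real_inner_comm a y]
      ring
    simp only [h2]
    rw [← integral_const_mul]
    congr 1
    funext a
    rw [hFg a]
    ring
  -- final assembly
  have hσφ : ∀ a : EuclideanSpace ℝ (Fin k),
      σ a = φ (∑ i : Fin k, a i • w (Fin.castLE hkn i)) := by
    intro a
    show φ (Ue (a, 0)) = _
    rw [hU0 a]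
  have hconst : (((2*π) ^ m : ℝ) : ℂ) * fourierConst m =
      ((Real.rpow (2 * Real.pi) (((n : ℝ) - (k : ℝ)) / 2) : ℝ) : ℂ) := by
    rw [hfc, ← Complex.ofReal_mul]
    congr 1
    have hrw : Real.rpow (2 * Real.pi) (((n : ℝ) - (k : ℝ)) / 2) =
        (2*π) ^ (((n : ℝ) - (k : ℝ)) / 2) := rfl
    rw [hrw, ← Real.rpow_natCast (2*π) m, ← Real.rpow_add h2π]
    congr 1
    have hcast : (k:ℝ) + (m:ℝ) = (n:ℝ) := by exact_mod_cast congrArg (Nat.cast : ℕ → ℝ) hkm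
    linarith
  rw [stepA, stepC, step2, stepH, hconst]
  have hfun : (fun a : EuclideanSpace ℝ (Fin k) => Fg a * σ a) =
      (fun y : EuclideanSpace ℝ (Fin k) =>
        Fg y * φ (∑ i : Fin k, y i • w (Fin.castLE hkn i))) :=
    funext fun a => by rw [hσφ a]
  rw [hfun]
end

section
/- Let T ∈ S'(R^n) be the tempered distribution acting by T(φ) = ∫_{R^k} r(y) φ(A_1 y) dy, where r ∈ S(R^k), A_1 = [a_1,...,a_k] has orthonormal columns completed to an orthonormal basis a_1,...,a_n of R^n. Then the inverse Fourier transform of T is a function of the form (2π)^{-(n−k)/2} g̃(a_1^T ξ,...,a_k^T ξ) with g̃ = F^{-1}[r] ∈ S(R^k). -/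
open MeasureTheory

/-- Let `T ∈ S'(ℝⁿ)` act by `T(φ) = ∫_{ℝᵏ} r(y) φ(A₁ y) dy` with `r ∈ S(ℝᵏ)` and
`a₁, …, a_n` an orthonormal basis whose first `k` vectors form `A₁`.  Then the inverse
Fourier transform of `T` is the function
`ξ ↦ (2π)^(-(n-k)/2) g̃(a₁ᵀξ, …, a_kᵀξ)` with `g̃ = F⁻¹[r]`; tested against a Schwartz
`φ`, this reads `T(F⁻¹[φ]) = ∫ (2π)^(-(n-k)/2) g̃(a₁ᵀξ, …, a_kᵀξ) φ(ξ) dξ`. -/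
theorem inverse_fourier_of_subspace_distribution (n k : ℕ) (hkn : k ≤ n)
    (a : Fin n → EuclideanSpace ℝ (Fin n)) (ha : Orthonormal ℝ a)
    (r : SchwartzMap (EuclideanSpace ℝ (Fin k)) ℂ)
    (gt : EuclideanSpace ℝ (Fin k) → ℂ)
    (hgt : ∀ y, gt y = fourierConst k *
      ∫ z, r z * Complex.exp (Complex.I * ((inner ℝ y z : ℝ) : ℂ)))
    (Finvφ : SchwartzMap (EuclideanSpace ℝ (Fin n)) ℂ → EuclideanSpace ℝ (Fin n) → ℂ)
    (hFinvφ : ∀ φ x, Finvφ φ x = fourierConst n *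
      ∫ ξ, φ ξ * Complex.exp (Complex.I * ((inner ℝ x ξ : ℝ) : ℂ))) :
    ∀ φ : SchwartzMap (EuclideanSpace ℝ (Fin n)) ℂ,
      (∫ y : EuclideanSpace ℝ (Fin k),
          r y * Finvφ φ (∑ i : Fin k, y i • a (Fin.castLE hkn i))) =
        ∫ ξ : EuclideanSpace ℝ (Fin n),
          ((Real.rpow (2 * Real.pi) (-((n : ℝ) - (k : ℝ)) / 2)) : ℂ) *
            gt ((EuclideanSpace.equiv (Fin k) ℝ).symm
              (fun i : Fin k => inner ℝ (a (Fin.castLE hkn i)) ξ)) * φ ξ := by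
  intro φ
  set P : EuclideanSpace ℝ (Fin n) → EuclideanSpace ℝ (Fin k) :=
    fun ξ => (EuclideanSpace.equiv (Fin k) ℝ).symm
      (fun i : Fin k => inner ℝ (a (Fin.castLE hkn i)) ξ) with hP
  -- inner product identity
  have hinner : ∀ (y : EuclideanSpace ℝ (Fin k)) (ξ : EuclideanSpace ℝ (Fin n)),
      (inner ℝ (∑ i : Fin k, y i • a (Fin.castLE hkn i)) ξ : ℝ) = (inner ℝ y (P ξ) : ℝ) := by
    intro y ξ
    rw [sum_inner]
    simp only [real_inner_smul_left, hP, PiLp.inner_apply, RCLike.inner_apply, conj_trivial]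
    simp [Finset.mul_sum, mul_assoc]
    refine Finset.sum_congr rfl fun i _ => ?_
    rw [Finset.sum_mul]
    refine Finset.sum_congr rfl fun j _ => ?_
    ring
  -- continuity of P
  have hPcont : Continuous P := by
    refine ((EuclideanSpace.equiv (Fin k) ℝ).symm.continuous).comp ?_
    exact continuous_pi fun i => continuous_const.inner continuous_id
  have hexp_norm : ∀ t : ℝ, ‖Complex.exp (Complex.I * (t : ℂ))‖ = 1 := by
    intro t; rw [Complex.norm_exp]; simp
  -- integrability on the product
  have hInt : Integrable (Function.uncurry fun (y : EuclideanSpace ℝ (Fin k))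
      (ξ : EuclideanSpace ℝ (Fin n)) =>
      Complex.exp (Complex.I * ((inner ℝ y (P ξ) : ℝ) : ℂ)) * (r y * φ ξ))
      (volume.prod volume) := by
    refine Integrable.bdd_mul (c := 1) ?_ ?_ ?_
    · exact (r.integrable).mul_prod (φ.integrable)
    · refine Continuous.aestronglyMeasurable ?_
      exact Complex.continuous_exp.comp (continuous_const.mul
        (Complex.continuous_ofReal.comp
          (continuous_fst.inner (hPcont.comp continuous_snd))))
    · exact Filter.Eventually.of_forall fun x => le_of_eq (hexp_norm _)
  -- constant identity
  have hconst : fourierConst n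
      = ((Real.rpow (2 * Real.pi) (-((n : ℝ) - (k : ℝ)) / 2)) : ℂ) * fourierConst k := by
    unfold fourierConst
    rw [← Complex.ofReal_mul]
    congr 1
    have key : ∀ x y : ℝ, Real.rpow x y = x ^ y := fun _ _ => rfl
    simp only [key]
    rw [← Real.rpow_add (by positivity)]
    ring_nf
  -- inner integral identity
  have hXi : ∀ ξ : EuclideanSpace ℝ (Fin n),
      (∫ y, Complex.exp (Complex.I * ((inner ℝ y (P ξ) : ℝ) : ℂ)) * (r y * φ ξ))
        = (∫ z, r z * Complex.exp (Complex.I * ((inner ℝ (P ξ) z : ℝ) : ℂ))) * φ ξ := by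
    intro ξ
    rw [← integral_mul_const]
    congr 1; funext z
    rw [real_inner_comm]
    ring
  calc (∫ y : EuclideanSpace ℝ (Fin k),
          r y * Finvφ φ (∑ i : Fin k, y i • a (Fin.castLE hkn i)))
      = fourierConst n * ∫ y, ∫ ξ,
          Complex.exp (Complex.I * ((inner ℝ y (P ξ) : ℝ) : ℂ)) * (r y * φ ξ) := by
        rw [← integral_const_mul]
        congr 1; funext y
        rw [hFinvφ]
        simp only [hinner]
        rw [← integral_const_mul, ← integral_const_mul, ← integral_const_mul]
        congr 1; funext ξ; ring
    _ = fourierConst n * ∫ ξ, ∫ y,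
          Complex.exp (Complex.I * ((inner ℝ y (P ξ) : ℝ) : ℂ)) * (r y * φ ξ) := by
        rw [integral_integral_swap hInt]
    _ = ∫ ξ : EuclideanSpace ℝ (Fin n),
          ((Real.rpow (2 * Real.pi) (-((n : ℝ) - (k : ℝ)) / 2)) : ℂ) *
            gt (P ξ) * φ ξ := by
        rw [← integral_const_mul]
        congr 1; funext ξ
        rw [hXi, hgt, hconst]
        ring
end

section
/- For n > 2 and any a ∈ R^n, ∫_{R^n} e^{−|x−a|^2/2} / |x|^2 dx ≤ ∫_{R^n} e^{−|x|^2/2} / |x|^2 dx. -/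
open MeasureTheory

open Real Set
open scoped ENNReal

lemma gauss_integrable (c : ℝ) : Integrable (fun x : ℝ => Real.exp (-(x - c)^2/2)) := by
  have h : Integrable (fun x : ℝ => Real.exp (-(1/2 : ℝ) * x ^ 2)) :=
    integrable_exp_neg_mul_sq (by norm_num)
  have := h.comp_sub_right c
  refine this.congr (Filter.Eventually.of_forall fun x => ?_)
  ring_nf

lemma gauss_integrable' : Integrable (fun x : ℝ => Real.exp (-x^2/2)) := by
  refine (gauss_integrable 0).congr (Filter.Eventually.of_forall fun x => ?_)
  norm_num

lemma gauss_interval (L c : ℝ) (hL : 0 ≤ L) (hc : 0 ≤ c) :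
    (∫ x in (-L)..L, Real.exp (-(x - c)^2/2)) ≤ ∫ x in (-L)..L, Real.exp (-x^2/2) := by
  have hint : ∀ a b : ℝ, IntervalIntegrable (fun x : ℝ => Real.exp (-x^2/2)) volume a b :=
    fun a b => gauss_integrable'.intervalIntegrable
  have hshift : (∫ x in (-L)..L, Real.exp (-(x - c)^2/2))
      = ∫ x in (-L - c)..(L - c), Real.exp (-x^2/2) := by
    simpa using intervalIntegral.integral_comp_sub_right (fun x => Real.exp (-x^2/2)) c (a := -L) (b := L)
  have hadd1 : (∫ x in (-L - c)..(L - c), Real.exp (-x^2/2))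
        + (∫ x in (L - c)..L, Real.exp (-x^2/2))
      = ∫ x in (-L - c)..L, Real.exp (-x^2/2) :=
    intervalIntegral.integral_add_adjacent_intervals (hint _ _) (hint _ _)
  have hadd2 : (∫ x in (-L - c)..(-L), Real.exp (-x^2/2))
        + (∫ x in (-L)..L, Real.exp (-x^2/2))
      = ∫ x in (-L - c)..L, Real.exp (-x^2/2) :=
    intervalIntegral.integral_add_adjacent_intervals (hint _ _) (hint _ _)
  have hcomp : (∫ x in (L - c)..L, Real.exp (-x^2/2))
      = ∫ x in (-L - c)..(-L), Real.exp (-(x + 2*L)^2/2) := by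
    rw [intervalIntegral.integral_comp_add_right (a := -L - c) (b := -L)
      (fun x => Real.exp (-x^2/2)) (2*L)]
    congr 1 <;> ring
  have hint2 : IntervalIntegrable (fun x : ℝ => Real.exp (-(x + 2*L)^2/2)) volume (-L - c) (-L) := by
    refine Integrable.intervalIntegrable ?_
    refine (gauss_integrable (-(2*L))).congr (Filter.Eventually.of_forall fun x => ?_)
    ring_nf
  have hmono : (∫ x in (-L - c)..(-L), Real.exp (-x^2/2))
      ≤ ∫ x in (-L - c)..(-L), Real.exp (-(x + 2*L)^2/2) := by
    apply intervalIntegral.integral_mono_on (by linarith) (hint _ _) hint2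
    intro x hx
    rcases hx with ⟨h1, h2⟩
    apply Real.exp_le_exp.2
    have : (x + 2*L)^2 ≤ x^2 := by nlinarith
    linarith
  rw [← hcomp] at hmono
  linarith

lemma sq_lt_set (b : ℝ) (hb : 0 < b) : {x : ℝ | x^2 < b} = Ioo (-Real.sqrt b) (Real.sqrt b) := by
  ext x
  simp only [mem_setOf_eq, mem_Ioo]
  constructor
  · intro h
    have : |x| < Real.sqrt b := by
      rw [← Real.sqrt_sq_eq_abs]; exact Real.sqrt_lt_sqrt (sq_nonneg x) h
    exact abs_lt.1 this
  · intro ⟨h1, h2⟩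
    have : |x| < Real.sqrt b := abs_lt.2 ⟨h1, h2⟩
    nlinarith [Real.sq_sqrt hb.le, abs_nonneg x, sq_abs x]

lemma oneD (b c : ℝ) (hc : 0 ≤ c) :
    ∫⁻ x in {x : ℝ | x^2 < b}, ENNReal.ofReal (Real.exp (-(x - c)^2/2))
      ≤ ∫⁻ x in {x : ℝ | x^2 < b}, ENNReal.ofReal (Real.exp (-x^2/2)) := by
  rcases le_or_gt b 0 with hb | hb
  · have : {x : ℝ | x^2 < b} = ∅ := by
      ext x; simp only [mem_setOf_eq, mem_empty_iff_false, iff_false, not_lt]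
      nlinarith [sq_nonneg x]
    simp [this]
  · rw [sq_lt_set b hb]
    have key : ∀ d : ℝ, ∫⁻ x in Ioo (-Real.sqrt b) (Real.sqrt b),
        ENNReal.ofReal (Real.exp (-(x - d)^2/2))
        = ENNReal.ofReal (∫ x in (-Real.sqrt b)..(Real.sqrt b), Real.exp (-(x - d)^2/2)) := by
      intro d
      rw [← ofReal_integral_eq_lintegral_ofReal ((gauss_integrable d).integrableOn)
        (Filter.Eventually.of_forall fun x => (Real.exp_pos _).le)]
      rw [intervalIntegral.integral_of_le (by linarith [Real.sqrt_nonneg b]),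
        ← integral_Ioc_eq_integral_Ioo]
    have key0 : ∫⁻ x in Ioo (-Real.sqrt b) (Real.sqrt b),
        ENNReal.ofReal (Real.exp (-x^2/2))
        = ENNReal.ofReal (∫ x in (-Real.sqrt b)..(Real.sqrt b), Real.exp (-x^2/2)) := by
      have := key 0
      simpa using this
    rw [key c, key0]
    exact ENNReal.ofReal_le_ofReal (gauss_interval _ _ (Real.sqrt_nonneg b) hc)

lemma prodD (m : ℕ) (b c : ℝ) (hc : 0 ≤ c) :
    ∫⁻ p : ℝ × (Fin m → ℝ) in {p : ℝ × (Fin m → ℝ) | p.1^2 + ∑ j, p.2 j ^ 2 < b},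
        ENNReal.ofReal (Real.exp (-((p.1 - c)^2 + ∑ j, p.2 j ^2)/2))
    ≤ ∫⁻ p : ℝ × (Fin m → ℝ) in {p : ℝ × (Fin m → ℝ) | p.1^2 + ∑ j, p.2 j ^ 2 < b},
        ENNReal.ofReal (Real.exp (-(p.1^2 + ∑ j, p.2 j ^2)/2)) := by
  have hQ : Measurable fun z : Fin m → ℝ => ∑ j, z j ^ 2 := by fun_prop
  have hset : MeasurableSet {p : ℝ × (Fin m → ℝ) | p.1^2 + ∑ j, p.2 j ^ 2 < b} := by
    apply measurableSet_lt ?_ measurable_const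
    fun_prop
  have key : ∀ d : ℝ,
      (∫⁻ p : ℝ × (Fin m → ℝ) in {p : ℝ × (Fin m → ℝ) | p.1^2 + ∑ j, p.2 j ^ 2 < b},
        ENNReal.ofReal (Real.exp (-((p.1 - d)^2 + ∑ j, p.2 j ^2)/2)))
      = ∫⁻ z : Fin m → ℝ,
          (∫⁻ s in {s : ℝ | s^2 < b - ∑ j, z j ^ 2}, ENNReal.ofReal (Real.exp (-(s - d)^2/2)))
            * ENNReal.ofReal (Real.exp (-(∑ j, z j ^2)/2)) := by
    intro d
    rw [← lintegral_indicator hset]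
    have hmeas : Measurable fun p : ℝ × (Fin m → ℝ) =>
        Set.indicator {p : ℝ × (Fin m → ℝ) | p.1^2 + ∑ j, p.2 j ^ 2 < b}
          (fun p => ENNReal.ofReal (Real.exp (-((p.1 - d)^2 + ∑ j, p.2 j ^2)/2))) p := by
      apply Measurable.indicator ?_ hset
      fun_prop
    rw [show (volume : Measure (ℝ × (Fin m → ℝ))) = (volume : Measure ℝ).prod volume from
      Measure.volume_eq_prod ℝ (Fin m → ℝ)]
    rw [lintegral_prod_symm' _ hmeas]
    congr 1
    ext z
    have step1 : ∀ s : ℝ,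
        Set.indicator {p : ℝ × (Fin m → ℝ) | p.1^2 + ∑ j, p.2 j ^ 2 < b}
          (fun p => ENNReal.ofReal (Real.exp (-((p.1 - d)^2 + ∑ j, p.2 j ^2)/2))) (s, z)
        = Set.indicator {s : ℝ | s^2 < b - ∑ j, z j ^ 2}
            (fun s => ENNReal.ofReal (Real.exp (-(s - d)^2/2))
              * ENNReal.ofReal (Real.exp (-(∑ j, z j ^2)/2))) s := by
      intro s
      have hval : ENNReal.ofReal (Real.exp (-((s - d)^2 + ∑ j, z j ^2)/2))
          = ENNReal.ofReal (Real.exp (-(s - d)^2/2)) * ENNReal.ofReal (Real.exp (-(∑ j, z j ^2)/2)) := by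
        rw [← ENNReal.ofReal_mul (Real.exp_pos _).le, ← Real.exp_add]
        ring_nf
      have hmem : ((s, z) ∈ {p : ℝ × (Fin m → ℝ) | p.1^2 + ∑ j, p.2 j ^ 2 < b})
          ↔ s ∈ {s : ℝ | s^2 < b - ∑ j, z j ^ 2} := by
        simp only [mem_setOf_eq]
        constructor <;> intro h <;> linarith
      by_cases h : s ∈ {s : ℝ | s^2 < b - ∑ j, z j ^ 2}
      · rw [Set.indicator_of_mem (hmem.2 h), Set.indicator_of_mem h, hval]
      · rw [Set.indicator_of_notMem (fun hh => h (hmem.1 hh)), Set.indicator_of_notMem h]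
    simp_rw [step1]
    rw [lintegral_indicator (by apply measurableSet_lt (by fun_prop) measurable_const)]
    rw [lintegral_mul_const' _ _ ENNReal.ofReal_ne_top]
  rw [key c]
  have := key 0
  simp only [sub_zero] at this
  rw [this]
  exact lintegral_mono fun z => mul_le_mul_left (oneD _ _ hc) _

lemma piD (m : ℕ) (b c : ℝ) (hc : 0 ≤ c) :
    ∫⁻ y : Fin (m+1) → ℝ in {y : Fin (m+1) → ℝ | ∑ i, y i ^2 < b},
      ENNReal.ofReal (Real.exp (-(∑ i, (y i - (if i = 0 then c else 0))^2)/2))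
    ≤ ∫⁻ y : Fin (m+1) → ℝ in {y : Fin (m+1) → ℝ | ∑ i, y i ^2 < b},
      ENNReal.ofReal (Real.exp (-(∑ i, y i ^2)/2)) := by
  have MP := (volume_preserving_piFinSuccAbove (fun _ : Fin (m+1) => ℝ) 0).symm
  have emb := (MeasurableEquiv.piFinSuccAbove (fun _ : Fin (m+1) => ℝ) 0).symm.measurableEmbedding
  have happ : ∀ p : ℝ × (Fin m → ℝ),
      (MeasurableEquiv.piFinSuccAbove (fun _ : Fin (m+1) => ℝ) 0).symm p
      = Fin.insertNth (α := fun _ : Fin (m+1) => ℝ) 0 p.1 p.2 := fun p => rfl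
  have hsum : ∀ (s : ℝ) (z : Fin m → ℝ),
      ∑ i, (Fin.insertNth (α := fun _ : Fin (m+1) => ℝ) 0 s z i)^2 = s^2 + ∑ j, z j ^2 := by
    intro s z
    rw [Fin.sum_univ_succ]
    simp [Fin.insertNth_zero, Fin.succAbove]
  have hsum2 : ∀ (s : ℝ) (z : Fin m → ℝ),
      ∑ i, (Fin.insertNth (α := fun _ : Fin (m+1) => ℝ) 0 s z i - (if i = 0 then c else 0))^2
        = (s - c)^2 + ∑ j, z j ^2 := by
    intro s z
    rw [Fin.sum_univ_succ]
    simp [Fin.insertNth_zero, Fin.succ_ne_zero, Fin.succAbove]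
  -- change of variables for both sides
  have cov : ∀ F : (Fin (m+1) → ℝ) → ℝ≥0∞,
      (∫⁻ y in {y : Fin (m+1) → ℝ | ∑ i, y i ^2 < b}, F y)
      = ∫⁻ p : ℝ × (Fin m → ℝ) in
          {p : ℝ × (Fin m → ℝ) | p.1^2 + ∑ j, p.2 j ^ 2 < b},
          F (Fin.insertNth (α := fun _ : Fin (m+1) => ℝ) 0 p.1 p.2) := by
    intro F
    rw [← MP.setLIntegral_comp_preimage_emb emb]
    have : (MeasurableEquiv.piFinSuccAbove (fun _ : Fin (m+1) => ℝ) 0).symm ⁻¹'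
        {y : Fin (m+1) → ℝ | ∑ i, y i ^2 < b}
        = {p : ℝ × (Fin m → ℝ) | p.1^2 + ∑ j, p.2 j ^ 2 < b} := by
      ext p
      simp only [mem_preimage, mem_setOf_eq, happ, hsum]
    rw [this]
    rfl
  rw [cov, cov]
  simp_rw [hsum, hsum2]
  exact prodD m b c hc

lemma ballD (m : ℕ) (b : ℝ) (a : EuclideanSpace ℝ (Fin (m+1))) :
    ∫⁻ x in {x : EuclideanSpace ℝ (Fin (m+1)) | ‖x‖^2 < b},
        ENNReal.ofReal (Real.exp (-‖x - a‖^2/2))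
    ≤ ∫⁻ x in {x : EuclideanSpace ℝ (Fin (m+1)) | ‖x‖^2 < b},
        ENNReal.ofReal (Real.exp (-‖x‖^2/2)) := by
  set c : ℝ := ‖a‖ with hc
  set w : EuclideanSpace ℝ (Fin (m+1)) := c • EuclideanSpace.single (0 : Fin (m+1)) (1:ℝ) with hw
  have hnw : ‖w‖ = ‖a‖ := by
    rw [hw, norm_smul, EuclideanSpace.norm_single]
    simp [hc, abs_of_nonneg (norm_nonneg a)]
  -- reflection sending a to w
  set R := Submodule.reflection (ℝ ∙ (a - w))ᗮ with hR
  have hRa : R a = w := Submodule.reflection_sub hnw.symm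
  have hRw : R w = a := by
    have := Submodule.reflection_involutive (ℝ ∙ (a - w))ᗮ a
    rw [hRa] at this
    exact this
  have hMPR : MeasurePreserving R volume volume := R.measurePreserving
  have hembR : MeasurableEmbedding R := R.toHomeomorph.measurableEmbedding
  have hpre : (⇑R) ⁻¹' {x : EuclideanSpace ℝ (Fin (m+1)) | ‖x‖^2 < b} = {x : EuclideanSpace ℝ (Fin (m+1)) | ‖x‖^2 < b} := by
    ext x; simp only [mem_preimage, mem_setOf_eq, R.norm_map]
  have step1 : (∫⁻ x in {x : EuclideanSpace ℝ (Fin (m+1)) | ‖x‖^2 < b}, ENNReal.ofReal (Real.exp (-‖x - a‖^2/2)))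
      = ∫⁻ x in {x : EuclideanSpace ℝ (Fin (m+1)) | ‖x‖^2 < b}, ENNReal.ofReal (Real.exp (-‖x - w‖^2/2)) := by
    rw [← hMPR.setLIntegral_comp_preimage_emb hembR
      (fun x => ENNReal.ofReal (Real.exp (-‖x - a‖^2/2))) {x : EuclideanSpace ℝ (Fin (m+1)) | ‖x‖^2 < b}, hpre]
    congr 1
    ext x
    congr 2
    rw [show R x - a = R (x - w) by rw [map_sub, hRw], R.norm_map]
  rw [step1]
  -- transfer to pi space
  have MPψ := (EuclideanSpace.volume_preserving_symm_measurableEquiv_toLp (Fin (m+1))).symm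
  have embψ := ((MeasurableEquiv.toLp 2 (Fin (m+1) → ℝ)).symm).symm.measurableEmbedding
  have hψnorm : ∀ y : Fin (m+1) → ℝ,
      ‖((MeasurableEquiv.toLp 2 (Fin (m+1) → ℝ)).symm).symm y‖^2 = ∑ i, y i ^2 := by
    intro y
    rw [EuclideanSpace.norm_eq, Real.sq_sqrt (Finset.sum_nonneg fun i _ => sq_nonneg _)]
    simp only [Real.norm_eq_abs, sq_abs]
    rfl
  have hψset : ((MeasurableEquiv.toLp 2 (Fin (m+1) → ℝ)).symm).symm ⁻¹' {x : EuclideanSpace ℝ (Fin (m+1)) | ‖x‖^2 < b}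
      = {y : Fin (m+1) → ℝ | ∑ i, y i ^2 < b} := by
    ext y; simp only [mem_preimage, mem_setOf_eq, hψnorm y]
  have hψsub : ∀ y : Fin (m+1) → ℝ,
      ‖((MeasurableEquiv.toLp 2 (Fin (m+1) → ℝ)).symm).symm y - w‖^2
      = ∑ i, (y i - (if i = 0 then c else 0))^2 := by
    intro y
    rw [EuclideanSpace.norm_eq, Real.sq_sqrt (Finset.sum_nonneg fun i _ => sq_nonneg _)]
    refine Finset.sum_congr rfl fun i _ => ?_
    rw [Real.norm_eq_abs, sq_abs]
    congr 1
    show (((MeasurableEquiv.toLp 2 (Fin (m+1) → ℝ)).symm).symm y - w) i = _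
    have : (((MeasurableEquiv.toLp 2 (Fin (m+1) → ℝ)).symm).symm y - w) i
        = y i - w i := rfl
    rw [this]
    congr 1
    rw [hw]
    show c * (EuclideanSpace.single (0 : Fin (m+1)) (1:ℝ)) i = _
    rw [EuclideanSpace.single_apply]
    by_cases h : i = 0 <;> simp [h]
  have covL := MPψ.setLIntegral_comp_preimage_emb embψ
      (fun x => ENNReal.ofReal (Real.exp (-‖x - w‖^2/2))) {x : EuclideanSpace ℝ (Fin (m+1)) | ‖x‖^2 < b}
  have covR := MPψ.setLIntegral_comp_preimage_emb embψ
      (fun x => ENNReal.ofReal (Real.exp (-‖x‖^2/2))) {x : EuclideanSpace ℝ (Fin (m+1)) | ‖x‖^2 < b}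
  rw [hψset] at covL covR
  rw [← covL, ← covR]
  simp_rw [hψsub, hψnorm]
  exact piD m b c (norm_nonneg a)

lemma layer (m : ℕ) (a : EuclideanSpace ℝ (Fin (m+1))) :
    (∫⁻ x : EuclideanSpace ℝ (Fin (m+1)), ENNReal.ofReal (Real.exp (-‖x - a‖^2/2) / ‖x‖^2))
    = ∫⁻ t in Ioi (0:ℝ), ∫⁻ x in {x : EuclideanSpace ℝ (Fin (m+1)) | ‖x‖^2 < 1/t},
        ENNReal.ofReal (Real.exp (-‖x - a‖^2/2)) := by
  set F : ℝ × EuclideanSpace ℝ (Fin (m+1)) → ℝ≥0∞ := fun p =>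
    Set.indicator {p : ℝ × EuclideanSpace ℝ (Fin (m+1)) | ‖p.2‖^2 * p.1 < 1}
      (fun p => ENNReal.ofReal (Real.exp (-‖p.2 - a‖^2/2))) p with hF
  have hFmeas : Measurable F := by
    apply Measurable.indicator
    · fun_prop
    · apply measurableSet_lt ?_ measurable_const
      fun_prop
  -- RHS equals iterated integral of F
  have hRHS : (∫⁻ t in Ioi (0:ℝ), ∫⁻ x in {x : EuclideanSpace ℝ (Fin (m+1)) | ‖x‖^2 < 1/t},
        ENNReal.ofReal (Real.exp (-‖x - a‖^2/2)))
      = ∫⁻ t in Ioi (0:ℝ), ∫⁻ x : EuclideanSpace ℝ (Fin (m+1)), F (t, x) := by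
    apply setLIntegral_congr_fun measurableSet_Ioi
    intro t ht
    have hsets : {x : EuclideanSpace ℝ (Fin (m+1)) | ‖x‖^2 < 1/t}
        = {x : EuclideanSpace ℝ (Fin (m+1)) | ‖x‖^2 * t < 1} := by
      ext x
      simp only [mem_setOf_eq]
      rw [lt_div_iff₀ ht]
    have hsetmeas : MeasurableSet {x : EuclideanSpace ℝ (Fin (m+1)) | ‖x‖^2 * t < 1} := by
      apply measurableSet_lt ?_ measurable_const
      fun_prop
    beta_reduce
    rw [hsets, ← lintegral_indicator hsetmeas]
    refine lintegral_congr fun y => ?_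
    simp only [hF, Set.indicator_apply, mem_setOf_eq]
  rw [hRHS]
  -- swap
  rw [lintegral_lintegral_swap (hFmeas.aemeasurable)]
  -- pointwise identity a.e.
  have hae : ∀ᵐ x : EuclideanSpace ℝ (Fin (m+1)), x ≠ 0 := by
    rw [MeasureTheory.ae_iff]
    simpa using measure_singleton (0 : EuclideanSpace ℝ (Fin (m+1)))
  apply lintegral_congr_ae
  filter_upwards [hae] with x hx
  symm
  have hxn : ‖x‖ ≠ 0 := norm_ne_zero_iff.2 hx
  have hx2 : (0:ℝ) < ‖x‖^2 := by positivity
  have hsett : {t : ℝ | ‖x‖^2 * t < 1} = Iio ((‖x‖^2)⁻¹) := by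
    ext t
    simp only [mem_setOf_eq, mem_Iio]
    rw [mul_comm, ← lt_div_iff₀ hx2, div_eq_mul_inv, one_mul]
  calc ∫⁻ t in Ioi (0:ℝ), F (t, x)
      = ∫⁻ t in Ioi (0:ℝ), ({t : ℝ | ‖x‖^2 * t < 1}.indicator
          (fun _ => ENNReal.ofReal (Real.exp (-‖x - a‖^2/2)))) t := by
        refine setLIntegral_congr_fun measurableSet_Ioi (fun t _ => ?_)
        simp only [hF, Set.indicator_apply, mem_setOf_eq]
    _ = ENNReal.ofReal (Real.exp (-‖x - a‖^2/2)) * volume (Iio ((‖x‖^2)⁻¹) ∩ Ioi 0) := by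
        rw [hsett, lintegral_indicator measurableSet_Iio, Measure.restrict_restrict measurableSet_Iio,
          lintegral_const, Measure.restrict_apply MeasurableSet.univ, Set.univ_inter]
    _ = ENNReal.ofReal (Real.exp (-‖x - a‖^2/2) / ‖x‖^2) := by
        rw [Set.inter_comm, Set.Ioi_inter_Iio]
        have h0 : (0:ℝ) < (‖x‖^2)⁻¹ := by positivity
        rw [Real.volume_Ioo, sub_zero]
        simp only [div_eq_mul_inv]
        rw [← ENNReal.ofReal_mul (Real.exp_pos _).le]

lemma gaussE (m : ℕ) :
    Integrable (fun x : EuclideanSpace ℝ (Fin (m+1)) => Real.exp (-‖x‖^2/2)) := by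
  have h := (GaussianFourier.integrable_cexp_neg_mul_sq_norm_add (V := EuclideanSpace ℝ (Fin (m+1)))
    (b := (1/2 : ℂ)) (by norm_num) 0 0).norm
  refine h.congr (Filter.Eventually.of_forall fun v => ?_)
  show ‖Complex.exp _‖ = _
  rw [Complex.norm_exp]
  congr 1
  rw [zero_mul, add_zero, show ((-(1/2):ℂ) * (‖v‖:ℂ) ^ 2) = ((-‖v‖^2/2 : ℝ) : ℂ) by push_cast; ring]
  exact Complex.ofReal_re _

lemma finK (m : ℕ) (hm : 2 < m + 1) :
    (∫⁻ x : EuclideanSpace ℝ (Fin (m+1)), ENNReal.ofReal (Real.exp (-‖x‖^2/2) / ‖x‖^2)) ≠ ∞ := by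
  have h0 := layer m 0
  simp only [sub_zero] at h0
  rw [h0]
  set n := m + 1
  have hG : (∫⁻ x : EuclideanSpace ℝ (Fin n), ENNReal.ofReal (Real.exp (-‖x‖^2/2))) < ∞ :=
    (gaussE m).lintegral_lt_top
  set I : ℝ → ℝ≥0∞ := fun t => ∫⁻ x in {x : EuclideanSpace ℝ (Fin n) | ‖x‖^2 < 1/t},
    ENNReal.ofReal (Real.exp (-‖x‖^2/2)) with hI
  have hsplit : Ioc (0:ℝ) 1 ∪ Ioi (1:ℝ) = Ioi 0 := Ioc_union_Ioi_eq_Ioi zero_le_one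
  rw [← hsplit, lintegral_union measurableSet_Ioi (Set.Ioc_disjoint_Ioi le_rfl)]
  have hterm1 : (∫⁻ t in Ioc (0:ℝ) 1, I t) < ∞ := by
    calc ∫⁻ t in Ioc (0:ℝ) 1, I t
        ≤ ∫⁻ _ in Ioc (0:ℝ) 1, (∫⁻ x : EuclideanSpace ℝ (Fin n), ENNReal.ofReal (Real.exp (-‖x‖^2/2))) := by
          apply setLIntegral_mono' measurableSet_Ioc
          intro t _
          exact setLIntegral_le_lintegral _ _
      _ = (∫⁻ x : EuclideanSpace ℝ (Fin n), ENNReal.ofReal (Real.exp (-‖x‖^2/2))) * volume (Ioc (0:ℝ) 1) :=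
          setLIntegral_const _ _
      _ < ∞ := by
          apply ENNReal.mul_lt_top hG
          simp [Real.volume_Ioc]
  have hterm2 : (∫⁻ t in Ioi (1:ℝ), I t) < ∞ := by
    have hV : volume (Metric.ball (0 : EuclideanSpace ℝ (Fin n)) 1) < ∞ := measure_ball_lt_top
    have hball : ∀ t : ℝ, 0 < t → I t ≤ ENNReal.ofReal (t ^ (-(n:ℝ)/2))
        * volume (Metric.ball (0 : EuclideanSpace ℝ (Fin n)) 1) := by
      intro t ht
      have h1t : (0:ℝ) < 1/t := by positivity
      have hsetball : {x : EuclideanSpace ℝ (Fin n) | ‖x‖^2 < 1/t}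
          = Metric.ball (0 : EuclideanSpace ℝ (Fin n)) (Real.sqrt (1/t)) := by
        ext x
        rw [Metric.mem_ball, dist_zero_right, mem_setOf_eq, ← Real.lt_sqrt (norm_nonneg x)]
      have hb1 : I t ≤ volume {x : EuclideanSpace ℝ (Fin n) | ‖x‖^2 < 1/t} := by
        rw [hI]
        calc (∫⁻ x in {x : EuclideanSpace ℝ (Fin n) | ‖x‖^2 < 1/t}, ENNReal.ofReal (Real.exp (-‖x‖^2/2)))
            ≤ ∫⁻ _ in {x : EuclideanSpace ℝ (Fin n) | ‖x‖^2 < 1/t}, 1 := by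
              apply setLIntegral_mono' ?_ ?_
              · apply measurableSet_lt (by fun_prop) measurable_const
              · intro x _
                apply ENNReal.ofReal_le_one.2
                apply Real.exp_le_one_iff.2
                have : (0:ℝ) ≤ ‖x‖^2 := sq_nonneg _
                linarith
          _ = volume {x : EuclideanSpace ℝ (Fin n) | ‖x‖^2 < 1/t} := setLIntegral_one _
      rw [hsetball] at hb1
      have hvol : volume (Metric.ball (0 : EuclideanSpace ℝ (Fin n)) (Real.sqrt (1/t)))
          = ENNReal.ofReal (t ^ (-(n:ℝ)/2)) * volume (Metric.ball (0 : EuclideanSpace ℝ (Fin n)) 1) := by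
        rw [Measure.addHaar_ball volume 0 (Real.sqrt_nonneg _), finrank_euclideanSpace_fin]
        congr 2
        rw [Real.sqrt_eq_rpow, ← Real.rpow_natCast ((1/t) ^ ((1:ℝ)/2)) n,
          ← Real.rpow_mul h1t.le, show (1:ℝ)/t = t⁻¹ from one_div t,
          Real.inv_rpow ht.le, ← Real.rpow_neg ht.le]
        congr 1
        push_cast
        ring
      rw [← hvol]
      exact hb1
    calc (∫⁻ t in Ioi (1:ℝ), I t)
        ≤ ∫⁻ t in Ioi (1:ℝ), ENNReal.ofReal (t ^ (-(n:ℝ)/2))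
            * volume (Metric.ball (0 : EuclideanSpace ℝ (Fin n)) 1) := by
          apply setLIntegral_mono' measurableSet_Ioi
          intro t ht
          exact hball t (lt_trans zero_lt_one ht)
      _ = (∫⁻ t in Ioi (1:ℝ), ENNReal.ofReal (t ^ (-(n:ℝ)/2)))
            * volume (Metric.ball (0 : EuclideanSpace ℝ (Fin n)) 1) :=
          lintegral_mul_const' _ _ measure_ball_lt_top.ne
      _ < ∞ := by
          apply ENNReal.mul_lt_top ?_ hV
          have hint : IntegrableOn (fun t : ℝ => t ^ (-(n:ℝ)/2)) (Ioi 1) volume := by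
            apply integrableOn_Ioi_rpow_of_lt ?_ zero_lt_one
            have : (2:ℝ) < (n:ℝ) := by exact_mod_cast hm
            linarith
          exact hint.lintegral_lt_top
  exact (ENNReal.add_lt_top.2 ⟨hterm1, hterm2⟩).ne

/-- Hardy–Littlewood rearrangement bound: for `n > 2` and any `a ∈ ℝⁿ`,
`∫ e^{−|x−a|²/2}/|x|² dx ≤ ∫ e^{−|x|²/2}/|x|² dx`. -/
theorem shifted_gaussian_over_sq_le (n : ℕ) (hn : 2 < n)
    (a : EuclideanSpace ℝ (Fin n)) :
    (∫ x : EuclideanSpace ℝ (Fin n), Real.exp (-‖x - a‖ ^ 2 / 2) / ‖x‖ ^ 2) ≤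
      ∫ x : EuclideanSpace ℝ (Fin n), Real.exp (-‖x‖ ^ 2 / 2) / ‖x‖ ^ 2 := by
  obtain ⟨m, rfl⟩ : ∃ m, n = m + 1 := ⟨n - 1, by omega⟩
  have hma : AEStronglyMeasurable
      (fun x : EuclideanSpace ℝ (Fin (m+1)) => Real.exp (-‖x - a‖ ^ 2 / 2) / ‖x‖ ^ 2) volume := by
    apply Measurable.aestronglyMeasurable
    fun_prop
  have hm0 : AEStronglyMeasurable
      (fun x : EuclideanSpace ℝ (Fin (m+1)) => Real.exp (-‖x‖ ^ 2 / 2) / ‖x‖ ^ 2) volume := by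
    apply Measurable.aestronglyMeasurable
    fun_prop
  have hna : 0 ≤ᵐ[volume] fun x : EuclideanSpace ℝ (Fin (m+1)) =>
      Real.exp (-‖x - a‖ ^ 2 / 2) / ‖x‖ ^ 2 :=
    Filter.Eventually.of_forall fun x => div_nonneg (Real.exp_pos _).le (sq_nonneg _)
  have hn0 : 0 ≤ᵐ[volume] fun x : EuclideanSpace ℝ (Fin (m+1)) =>
      Real.exp (-‖x‖ ^ 2 / 2) / ‖x‖ ^ 2 :=
    Filter.Eventually.of_forall fun x => div_nonneg (Real.exp_pos _).le (sq_nonneg _)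
  rw [integral_eq_lintegral_of_nonneg_ae hna hma, integral_eq_lintegral_of_nonneg_ae hn0 hm0]
  apply ENNReal.toReal_mono (finK m hn)
  have h0 := layer m 0
  simp only [sub_zero] at h0
  rw [layer m a, h0]
  exact lintegral_mono fun t => ballD m (1/t) a
end
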